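/- Let 𝔉 be a non-empty formation of finite groups and 𝔏 an isomorphism-closed class of finite simple groups, and let 𝔏⁺ denote the class of abelian groups in 𝔏. Then there exists an 𝔏-composition satellite f with 𝔉 = CF_𝔏(f) if and only if there exists an 𝔏⁺-composition satellite h with 𝔉 = CF_{𝔏⁺}(h). -/

import Mathlib

set_option maxHeartbeats 1000000
set_option linter.unusedVariables false

/-- A bundled finite group. -/
structure FinGrp : Type 1 where
  carrier : Type
  [grp : Group carrier]
  [fin : Finite carrier]

attribute [instance] FinGrp.grp FinGrp.fin

/-- A class of finite groups. -/
abbrev GroupClass : Type 1 := ∀ (G : Type) [Group G] [Finite G], Prop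

/-- The empty class of groups. -/
def EmptyClass : GroupClass := fun _ _ _ => False

/-- A formation: a class of finite groups closed under isomorphism, homomorphic images and
subdirect products. -/
structure IsFormation (F : GroupClass) : Prop where
  iso_closed : ∀ (G : Type) [Group G] [Finite G] (H : Type) [Group H] [Finite H],
    Nonempty (G ≃* H) → F G → F H
  quotient_closed : ∀ (G : Type) [Group G] [Finite G] (N : Subgroup G) [N.Normal],
    F G → F (G ⧸ N)
  subdirect_closed : ∀ (G : Type) [Group G] [Finite G] (N₁ N₂ : Subgroup G)
    [N₁.Normal] [N₂.Normal], N₁ ⊓ N₂ = ⊥ → F (G ⧸ N₁) → F (G ⧸ N₂) → F G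

/-- `H/K` is a chief factor of `G` : both are normal in `G`, `K < H`, and no normal subgroup
of `G` lies strictly between them. -/
structure IsChiefFactor (G : Type) [Group G] (H K : Subgroup G) : Prop where
  normalH : H.Normal
  normalK : K.Normal
  lt : K < H
  no_middle : ∀ N : Subgroup G, N.Normal → K ≤ N → N ≤ H → N = K ∨ N = H

/-- The centralizer `C_G(H/K) = {g ∈ G | ∀ h ∈ H, g h g⁻¹ h⁻¹ ∈ K}` of a factor `H/K`. -/
def relCentralizer {G : Type} [Group G] (H K : Subgroup G) (hK : K.Normal) : Subgroup G where
  carrier := {g : G | ∀ h ∈ H, g * h * g⁻¹ * h⁻¹ ∈ K}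
  one_mem' := by intro h hh; simpa using K.one_mem
  mul_mem' := by
    intro a b ha hb h hh
    have key : a * b * h * (a * b)⁻¹ * h⁻¹ =
        (a * (b * h * b⁻¹ * h⁻¹) * a⁻¹) * (a * h * a⁻¹ * h⁻¹) := by group
    rw [key]
    exact K.mul_mem (hK.conj_mem _ (hb h hh) a) (ha h hh)
  inv_mem' := by
    intro a ha h hh
    have h1 : (a * h * a⁻¹ * h⁻¹)⁻¹ ∈ K := K.inv_mem (ha h hh)
    have key : a⁻¹ * h * a⁻¹⁻¹ * h⁻¹ = a⁻¹ * (a * h * a⁻¹ * h⁻¹)⁻¹ * a⁻¹⁻¹ := by group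
    exact key ▸ hK.conj_mem _ h1 a⁻¹

theorem mem_relCentralizer_iff {G : Type} [Group G] {H K : Subgroup G} (hK : K.Normal)
    (g : G) : g ∈ relCentralizer H K hK ↔ ∀ h ∈ H, g * h * g⁻¹ * h⁻¹ ∈ K := Iff.rfl

theorem relCentralizer_normal {G : Type} [Group G] {H K : Subgroup G}
    (hH : H.Normal) (hK : K.Normal) : (relCentralizer H K hK).Normal := by
  constructor
  intro c hc g h hh
  have hh' : g⁻¹ * h * g ∈ H := by simpa using hH.conj_mem h hh g⁻¹
  have hk := hc _ hh'
  have key : g * c * g⁻¹ * h * (g * c * g⁻¹)⁻¹ * h⁻¹ =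
      g * (c * (g⁻¹ * h * g) * c⁻¹ * (g⁻¹ * h * g)⁻¹) * g⁻¹ := by group
  exact key ▸ hK.conj_mem _ hk g

theorem normal_sInf {G : Type} [Group G] {S : Set (Subgroup G)}
    (h : ∀ N ∈ S, N.Normal) : (sInf S).Normal := by
  constructor
  intro n hn g
  rw [Subgroup.mem_sInf] at hn ⊢
  intro N hN
  exact (h N hN).conj_mem n (hn N hN) g

theorem normal_sSup {G : Type} [Group G] {S : Set (Subgroup G)}
    (h : ∀ N ∈ S, N.Normal) : (sSup S).Normal := by
  constructor
  intro n hn g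
  rw [sSup_eq_iSup'] at hn ⊢
  refine Subgroup.iSup_induction (fun N : S => (N : Subgroup G))
    (C := fun x => g * x * g⁻¹ ∈ ⨆ N : S, (N : Subgroup G)) hn
    (fun N x hx => ?_) ?_ (fun x y hx hy => ?_)
  · exact le_iSup (fun N : S => (N : Subgroup G)) N ((h N N.2).conj_mem x hx g)
  · simpa using Subgroup.one_mem _
  · show g * (x * y) * g⁻¹ ∈ _
    have key : g * (x * y) * g⁻¹ = g * x * g⁻¹ * (g * y * g⁻¹) := by group
    rw [key]
    exact Subgroup.mul_mem _ hx hy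
/-- `O_p(G)`: the largest normal `p`-subgroup of `G` (the join of all normal `p`-subgroups). -/
def pRadical (p : ℕ) (G : Type) [Group G] : Subgroup G :=
  sSup {N : Subgroup G | N.Normal ∧ IsPGroup p N}

instance pRadical_normal (p : ℕ) (G : Type) [Group G] : (pRadical p G).Normal :=
  normal_sSup fun _ hN => hN.1

/-- `O_{p'}(G)`: the largest normal subgroup of `G` of order coprime to `p`. -/
def pPrimeRadical (p : ℕ) (G : Type) [Group G] : Subgroup G :=
  sSup {N : Subgroup G | N.Normal ∧ Nat.Coprime (Nat.card N) p}

instance pPrimeRadical_normal (p : ℕ) (G : Type) [Group G] : (pPrimeRadical p G).Normal :=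
  normal_sSup fun _ hN => hN.1

/-- `O_{p',p}(G)`: the preimage in `G` of `O_p(G / O_{p'}(G))`. -/
def pPrimePRadical (p : ℕ) (G : Type) [Group G] : Subgroup G :=
  (pRadical p (G ⧸ pPrimeRadical p G)).comap (QuotientGroup.mk' (pPrimeRadical p G))

instance pPrimePRadical_normal (p : ℕ) (G : Type) [Group G] : (pPrimePRadical p G).Normal :=
  (pRadical_normal p _).comap _

/-- A composition series of `G` : a chain `⊥ = c 0 ≤ ⋯ ≤ c n = ⊤` of subgroups, each normal
in the next one with simple quotient. -/
def IsCompSeries {G : Type} [Group G] (n : ℕ) (c : Fin (n + 1) → Subgroup G) : Prop :=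
  c 0 = ⊥ ∧ c (Fin.last n) = ⊤ ∧
  ∀ i : Fin n, c i.castSucc ≤ c i.succ ∧
    ∃ hn : ((c i.castSucc).subgroupOf (c i.succ)).Normal,
      letI := hn
      IsSimpleGroup ((c i.succ) ⧸ (c i.castSucc).subgroupOf (c i.succ))

/-- `S` is (isomorphic to) a composition factor of the finite group `G`. -/
def IsCompFactor (S : Type) [Group S] (G : Type) [Group G] : Prop :=
  ∃ (n : ℕ) (c : Fin (n + 1) → Subgroup G), IsCompSeries n c ∧
    ∃ i : Fin n, ∃ hn : ((c i.castSucc).subgroupOf (c i.succ)).Normal,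
      letI := hn
      Nonempty (((c i.succ) ⧸ (c i.castSucc).subgroupOf (c i.succ)) ≃* S)

/-- The small centralizer `c_G(H/K)` of a factor `H/K` : the subgroup generated by all normal
subgroups `N` of `G` such that no composition factor of `NK/K` is isomorphic to a composition
factor of `H/K`. -/
def smallCentralizer {G : Type} [Group G] (H K : Subgroup G) (hK : K.Normal) : Subgroup G :=
  haveI := hK
  sSup {N : Subgroup G | N.Normal ∧ ∀ (S : Type) (_ : Group S),
    IsCompFactor S (↥(N ⊔ K) ⧸ K.subgroupOf (N ⊔ K)) → ¬ IsCompFactor S (H ⧸ K.subgroupOf H)}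

theorem smallCentralizer_normal {G : Type} [Group G] {H K : Subgroup G} (hK : K.Normal) :
    (smallCentralizer H K hK).Normal :=
  normal_sSup fun _ hN => hN.1

/-- `C^S(G)`: the intersection of the centralizers of all chief factors of `G` all of whose
composition factors are isomorphic to `S`. -/
def CSRad (S : Type) [Group S] (G : Type) [Group G] : Subgroup G :=
  sInf {C : Subgroup G | ∃ (H K : Subgroup G) (hcf : IsChiefFactor G H K),
    (haveI := hcf.normalK;
      ∀ (T : Type) (_ : Group T), IsCompFactor T (H ⧸ K.subgroupOf H) → Nonempty (T ≃* S)) ∧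
    C = relCentralizer H K hcf.normalK}

instance CSRad_normal (S : Type) [Group S] (G : Type) [Group G] : (CSRad S G).Normal :=
  normal_sInf fun C hC => by
    obtain ⟨H, K, hcf, -, rfl⟩ := hC
    exact relCentralizer_normal hcf.normalH hcf.normalK

/-- `C^p(G)`: the intersection of the centralizers of all chief factors of `G` whose order is
a power of the prime `p`. -/
def CpRad (p : ℕ) (G : Type) [Group G] : Subgroup G :=
  sInf {C : Subgroup G | ∃ (H K : Subgroup G) (hcf : IsChiefFactor G H K),
    (∃ n : ℕ, Nat.card (H ⧸ K.subgroupOf H) = p ^ n) ∧ C = relCentralizer H K hcf.normalK}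

instance CpRad_normal (p : ℕ) (G : Type) [Group G] : (CpRad p G).Normal :=
  normal_sInf fun C hC => by
    obtain ⟨H, K, hcf, -, rfl⟩ := hC
    exact relCentralizer_normal hcf.normalH hcf.normalK

/-- The centralizer of a normal subgroup is normal. -/
instance centralizer_normal_of_normal {G : Type} [Group G] (N : Subgroup G) [hN : N.Normal] :
    (Subgroup.centralizer (N : Set G)).Normal := by
  constructor
  intro c hc g
  rw [Subgroup.mem_centralizer_iff] at hc ⊢
  intro h hh
  have hh' : g⁻¹ * h * g ∈ N := by simpa using hN.conj_mem h hh g⁻¹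
  have hcomm := hc _ hh'
  have e1 : h * (g * c * g⁻¹) = g * (g⁻¹ * h * g * c) * g⁻¹ := by group
  rw [e1, hcomm]
  group

/-- The intersection of two normal subgroups is normal. -/
instance inf_normal {G : Type} [Group G] (A B : Subgroup G) [hA : A.Normal] [hB : B.Normal] :
    (A ⊓ B).Normal :=
  ⟨fun n hn g => ⟨hA.conj_mem n hn.1 g, hB.conj_mem n hn.2 g⟩⟩

instance finite_semidirectProduct {N G : Type} [Group N] [Group G] (φ : G →* MulAut N)
    [Finite N] [Finite G] : Finite (N ⋊[φ] G) :=
  Finite.of_injective (fun x => (x.left, x.right)) (by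
    intro a b hab
    simp only [Prod.mk.injEq] at hab
    exact SemidirectProduct.ext hab.1 hab.2)
/-! ### Satellites -/

/-- A local satellite: a map assigning to each prime a class of finite groups which is either
empty or a formation. -/
def IsLocalSatellite (f : ℕ → GroupClass) : Prop :=
  ∀ p : ℕ, p.Prime → (f p = EmptyClass ∨ IsFormation (f p))

/-- A chief factor `H/K` of `G` is `f`-central for a local satellite `f` if
`G / C_G(H/K) ∈ f q` for every prime `q` dividing `|H/K|`. -/
def LocFCentral (f : ℕ → GroupClass) {G : Type} [Group G] [Finite G]
    (H K : Subgroup G) (hcf : IsChiefFactor G H K) : Prop :=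
  ∀ q : ℕ, q.Prime → q ∣ Nat.card (H ⧸ K.subgroupOf H) →
    haveI := relCentralizer_normal hcf.normalH hcf.normalK
    f q (G ⧸ relCentralizer H K hcf.normalK)

/-- `LF f`: the class of all finite groups all of whose chief factors are `f`-central. -/
def LF (f : ℕ → GroupClass) (G : Type) [Group G] [Finite G] : Prop :=
  ∀ (H K : Subgroup G) (hcf : IsChiefFactor G H K), LocFCentral f H K hcf

/-- An `ω`-local satellite: values `f p` for `p ∈ ω` and a value `f'` (= `f(ω')`),
all empty or formations. -/
def IsOmegaLocalSatellite (ω : Set ℕ) (f : ℕ → GroupClass) (f' : GroupClass) : Prop :=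
  (∀ p ∈ ω, f p = EmptyClass ∨ IsFormation (f p)) ∧ (f' = EmptyClass ∨ IsFormation f')

/-- A chief factor `H/K` is `f`-central for the `ω`-local satellite `(f, f')`. -/
def OmegaFCentral (ω : Set ℕ) (f : ℕ → GroupClass) (f' : GroupClass) {G : Type} [Group G]
    [Finite G] (H K : Subgroup G) (hcf : IsChiefFactor G H K) : Prop :=
  ((∃ p ∈ ω, p ∣ Nat.card (H ⧸ K.subgroupOf H)) ∧
    ∀ p ∈ ω, p ∣ Nat.card (H ⧸ K.subgroupOf H) →
      haveI := relCentralizer_normal hcf.normalH hcf.normalK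
      f p (G ⧸ relCentralizer H K hcf.normalK)) ∨
  ((∀ p ∈ ω, ¬ p ∣ Nat.card (H ⧸ K.subgroupOf H)) ∧
    haveI := smallCentralizer_normal (H := H) hcf.normalK;
    f' (G ⧸ smallCentralizer H K hcf.normalK))

/-- `LF_ω(f)`: the class of all finite groups all of whose chief factors are `f`-central. -/
def LFomega (ω : Set ℕ) (f : ℕ → GroupClass) (f' : GroupClass) (G : Type) [Group G]
    [Finite G] : Prop :=
  ∀ (H K : Subgroup G) (hcf : IsChiefFactor G H K), OmegaFCentral ω f f' H K hcf

/-- A function assigning a class of finite groups to every finite group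
(used on simple groups). -/
abbrev CompSatFun : Type 1 := ∀ (S : Type) [Group S] [Finite S], GroupClass

/-- A composition satellite: assigns to each finite simple group (invariantly under isomorphism)
a class which is either empty or a formation. -/
def IsCompSatellite (f : CompSatFun) : Prop :=
  (∀ (S : Type) [Group S] [Finite S] (T : Type) [Group T] [Finite T],
      IsSimpleGroup S → IsSimpleGroup T → Nonempty (S ≃* T) → f S = f T) ∧
  (∀ (S : Type) [Group S] [Finite S], IsSimpleGroup S → (f S = EmptyClass ∨ IsFormation (f S)))

/-- A chief factor `H/K` of `G` is `f`-central for a composition satellite `f` if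
`G / C_G(H/K) ∈ f S` where `S` is the composition type of `H/K`. -/
def CompFCentral (f : CompSatFun) {G : Type} [Group G] [Finite G]
    (H K : Subgroup G) (hcf : IsChiefFactor G H K) : Prop :=
  ∀ (S : Type) (_ : Group S) (_ : Finite S),
    (haveI := hcf.normalK; IsCompFactor S (H ⧸ K.subgroupOf H)) →
    haveI := relCentralizer_normal hcf.normalH hcf.normalK
    f S (G ⧸ relCentralizer H K hcf.normalK)

/-- `CF f`: the class of all finite groups all of whose chief factors are `f`-central. -/
def CF (f : CompSatFun) (G : Type) [Group G] [Finite G] : Prop :=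
  ∀ (H K : Subgroup G) (hcf : IsChiefFactor G H K), CompFCentral f H K hcf

/-- An (isomorphism-closed) class of finite simple groups. -/
def IsSimpleClass (L : GroupClass) : Prop :=
  (∀ (S : Type) [Group S] [Finite S], L S → IsSimpleGroup S) ∧
  (∀ (S : Type) [Group S] [Finite S] (T : Type) [Group T] [Finite T],
    Nonempty (S ≃* T) → L S → L T)

/-- An `𝔏`-composition satellite: values `f S` for simple `S ∈ 𝔏` (invariant under isomorphism)
and a single value `f'` (= `f(𝔏')`), all empty or formations. -/
def IsLCompSatellite (L : GroupClass) (f : CompSatFun) (f' : GroupClass) : Prop :=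
  (∀ (S : Type) [Group S] [Finite S] (T : Type) [Group T] [Finite T],
      L S → L T → Nonempty (S ≃* T) → f S = f T) ∧
  (∀ (S : Type) [Group S] [Finite S], L S → (f S = EmptyClass ∨ IsFormation (f S))) ∧
  (f' = EmptyClass ∨ IsFormation f')

/-- A chief factor `H/K` is `f`-central for the `𝔏`-composition satellite `(f, f')` :
either its composition type `S` lies in `𝔏` and `G/C_G(H/K) ∈ f S`, or its composition type
lies in `𝔏'` and `G/c_G(H/K) ∈ f'`. -/
def LCompFCentral (L : GroupClass) (f : CompSatFun) (f' : GroupClass) {G : Type} [Group G]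
    [Finite G] (H K : Subgroup G) (hcf : IsChiefFactor G H K) : Prop :=
  ((∃ (S : Type) (_ : Group S) (_ : Finite S),
      (haveI := hcf.normalK; IsCompFactor S (H ⧸ K.subgroupOf H)) ∧ L S ∧
      (haveI := relCentralizer_normal hcf.normalH hcf.normalK;
        f S (G ⧸ relCentralizer H K hcf.normalK)))) ∨
  ((∃ (S : Type) (_ : Group S) (_ : Finite S),
      (haveI := hcf.normalK; IsCompFactor S (H ⧸ K.subgroupOf H)) ∧ IsSimpleGroup S ∧ ¬ L S) ∧
    haveI := smallCentralizer_normal (H := H) hcf.normalK;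
    f' (G ⧸ smallCentralizer H K hcf.normalK))

/-- `CF_𝔏(f)`: the class of all finite groups all of whose chief factors are `f`-central. -/
def CFL (L : GroupClass) (f : CompSatFun) (f' : GroupClass) (G : Type) [Group G]
    [Finite G] : Prop :=
  ∀ (H K : Subgroup G) (hcf : IsChiefFactor G H K), LCompFCentral L f f' H K hcf

/-! ### Radicals and saturation -/

/-- The largest normal subgroup all of whose composition factors lie in `𝔏`. -/
def ELRadical (L : GroupClass) (G : Type) [Group G] [Finite G] : Subgroup G :=
  sSup {N : Subgroup G | N.Normal ∧
    ∀ (S : Type) (_ : Group S) (_ : Finite S), IsCompFactor S N → L S}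

instance ELRadical_normal (L : GroupClass) (G : Type) [Group G] [Finite G] :
    (ELRadical L G).Normal :=
  normal_sSup fun _ hN => hN.1

/-- `G_{ωd}`: the largest normal subgroup of `G` all of whose `G`-chief factors below it have
order divisible by some prime in `ω`. -/
def omegadRadical (ω : Set ℕ) (G : Type) [Group G] [Finite G] : Subgroup G :=
  sSup {N : Subgroup G | N.Normal ∧ ∀ (H K : Subgroup G), IsChiefFactor G H K → H ≤ N →
    ∃ p ∈ ω, p ∣ Nat.card (H ⧸ K.subgroupOf H)}

instance omegadRadical_normal (ω : Set ℕ) (G : Type) [Group G] [Finite G] :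
    (omegadRadical ω G).Normal :=
  normal_sSup fun _ hN => hN.1

/-- The soluble radical: the largest normal soluble subgroup. -/
def solRadical (G : Type) [Group G] : Subgroup G :=
  sSup {N : Subgroup G | N.Normal ∧ IsSolvable N}

instance solRadical_normal (G : Type) [Group G] : (solRadical G).Normal :=
  normal_sSup fun _ hN => hN.1

/-- A finite group is `ω`-soluble if each of its composition factors either has order divisible
by no prime in `ω`, or is cyclic of order `p` for some `p ∈ ω`. -/
def IsOmegaSoluble (ω : Set ℕ) (X : Type) [Group X] : Prop :=
  ∀ (S : Type) (_ : Group S) (_ : Finite S), IsCompFactor S X →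
    (∀ p ∈ ω, ¬ p ∣ Nat.card S) ∨ (∃ p ∈ ω, Nat.card S = p ∧ IsCyclic S)

/-- The `ω`-soluble radical: the largest normal `ω`-soluble subgroup. -/
def omegaSolRadical (ω : Set ℕ) (G : Type) [Group G] : Subgroup G :=
  sSup {N : Subgroup G | N.Normal ∧ IsOmegaSoluble ω N}

instance omegaSolRadical_normal (ω : Set ℕ) (G : Type) [Group G] :
    (omegaSolRadical ω G).Normal :=
  normal_sSup fun _ hN => hN.1

/-- `𝔉` is `ℕ_p`-saturated : whenever `N` is a normal `p`-subgroup of `G` with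
`G/Φ(N) ∈ 𝔉`, then `G ∈ 𝔉`. -/
def NpSaturated (p : ℕ) (F : GroupClass) : Prop :=
  ∀ (G : Type) [Group G] [Finite G] (N : Subgroup G) [N.Normal], IsPGroup p N →
    ∀ (M : Subgroup G) [M.Normal], M = (frattini N).map N.subtype → F (G ⧸ M) → F G

/-- A minimal normal subgroup. -/
def IsMinimalNormal {G : Type} [Group G] (N : Subgroup G) : Prop :=
  N.Normal ∧ N ≠ ⊥ ∧ ∀ M : Subgroup G, M.Normal → M < N → M = ⊥

/-- The socle: the subgroup generated by all minimal normal subgroups. -/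
def socle (G : Type) [Group G] : Subgroup G :=
  sSup {N : Subgroup G | IsMinimalNormal N}

/-- A finite group is supersoluble if it has a chain of normal subgroups with cyclic
successive quotients. -/
def IsSupersoluble (X : Type) [Group X] : Prop :=
  ∃ (m : ℕ) (c : Fin (m + 1) → Subgroup X), c 0 = ⊥ ∧ c (Fin.last m) = ⊤ ∧
    (∀ i : Fin m, c i.castSucc ≤ c i.succ) ∧ (∀ i : Fin (m + 1), (c i).Normal) ∧
    ∀ i : Fin m, ∃ hn : ((c i.castSucc).subgroupOf (c i.succ)).Normal,
      letI := hn
      IsCyclic ((c i.succ) ⧸ (c i.castSucc).subgroupOf (c i.succ))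

/-- `Q(𝒳)` for `𝒳 = {G/C^p(G) | G ∈ F}`: the class of all (finite) groups isomorphic to a
quotient of some `G/C^p(G)` with `G ∈ F`. -/
def QModCp (p : ℕ) (F : GroupClass) (X : Type) [Group X] [Finite X] : Prop :=
  ∃ Gb : FinGrp, F Gb.carrier ∧
    ∃ (N : Subgroup (Gb.carrier ⧸ CpRad p Gb.carrier)) (_ : N.Normal),
      Nonempty (((Gb.carrier ⧸ CpRad p Gb.carrier) ⧸ N) ≃* X)

/-- The abelian members of a class of (simple) groups. -/
def abelianIn (L : GroupClass) (S : Type) [Group S] [Finite S] : Prop :=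
  L S ∧ ∀ a b : S, a * b = b * a

/-! ### Toolkit for statement 15 -/

section Toolkit

variable {X : Type} [Group X] {Y : Type} [Group Y]

theorem simple_congr (e : X ≃* Y) (h : IsSimpleGroup X) : IsSimpleGroup Y := by
  haveI := h
  haveI : Nontrivial Y := e.symm.toEquiv.nontrivial
  exact IsSimpleGroup.isSimpleGroup_of_surjective e.toMonoidHom e.surjective

theorem key_normal (f : X →* Y) {A B : Subgroup X} (hAB : A ≤ B)
    (hn : (A.subgroupOf B).Normal) : ((A.map f).subgroupOf (B.map f)).Normal := by
  constructor
  intro a ha g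
  rw [Subgroup.mem_subgroupOf] at ha ⊢
  obtain ⟨a0, ha0, ha0eq⟩ := ha
  obtain ⟨b0, hb0, hb0eq⟩ := g.2
  refine ⟨b0 * a0 * b0⁻¹, ?_, ?_⟩
  · have := hn.conj_mem ⟨a0, hAB ha0⟩ (by rwa [Subgroup.mem_subgroupOf]) ⟨b0, hb0⟩
    rwa [Subgroup.mem_subgroupOf] at this
  · show f (b0 * a0 * b0⁻¹) = _
    rw [map_mul, map_mul, map_inv, ha0eq, hb0eq]
    rfl

theorem key_equiv (f : X →* Y) {A B : Subgroup X} (hAB : A ≤ B) (hker : f.ker ⊓ B ≤ A)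
    [hn : (A.subgroupOf B).Normal] [hn2 : ((A.map f).subgroupOf (B.map f)).Normal] :
    Nonempty ((B ⧸ A.subgroupOf B) ≃* (B.map f ⧸ (A.map f).subgroupOf (B.map f))) := by
  let ψ : ↥B →* ((B.map f) ⧸ (A.map f).subgroupOf (B.map f)) :=
    (QuotientGroup.mk' _).comp (f.subgroupMap B)
  have hsurj : Function.Surjective ψ :=
    (QuotientGroup.mk'_surjective _).comp (f.subgroupMap_surjective B)
  have hker' : ψ.ker = A.subgroupOf B := by
    ext b
    rw [MonoidHom.mem_ker, Subgroup.mem_subgroupOf]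
    show (QuotientGroup.mk' _) ((f.subgroupMap B) b) = 1 ↔ _
    rw [QuotientGroup.mk'_apply, QuotientGroup.eq_one_iff, Subgroup.mem_subgroupOf]
    show f (b : X) ∈ A.map f ↔ _
    constructor
    · rintro ⟨a0, ha0, ha0eq⟩
      have hmemB : (b : X) * a0⁻¹ ∈ B := B.mul_mem b.2 (B.inv_mem (hAB ha0))
      have hkermem : (b : X) * a0⁻¹ ∈ f.ker := by
        rw [MonoidHom.mem_ker, map_mul, map_inv]
        have : f a0 = f (b : X) := ha0eq
        rw [this]
        group
      have : (b : X) * a0⁻¹ ∈ A := hker ⟨hkermem, hmemB⟩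
      have := A.mul_mem this ha0
      simpa using this
    · intro hbA
      exact ⟨(b : X), hbA, rfl⟩
  exact ⟨(QuotientGroup.quotientMulEquivOfEq hker').symm.trans
    (QuotientGroup.quotientKerEquivOfSurjective ψ hsurj)⟩

theorem isCompFactor_congr (e : X ≃* Y) {S : Type} [Group S] (h : IsCompFactor S X) :
    IsCompFactor S Y := by
  obtain ⟨n, c, ⟨h0, hl, hstep⟩, i0, hn0, ⟨e0⟩⟩ := h
  have hker : ∀ B A : Subgroup X, e.toMonoidHom.ker ⊓ B ≤ A := by
    intro B A
    have : e.toMonoidHom.ker = ⊥ := by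
      rw [MonoidHom.ker_eq_bot_iff]; exact e.injective
    rw [this]
    exact le_trans inf_le_left bot_le
  refine ⟨n, fun i => (c i).map e.toMonoidHom, ⟨?_, ?_, ?_⟩, i0, ?_, ?_⟩
  · show (c 0).map e.toMonoidHom = ⊥
    rw [h0, Subgroup.map_bot]
  · show (c (Fin.last n)).map e.toMonoidHom = ⊤
    rw [hl, Subgroup.map_top_of_surjective _ e.surjective]
  · intro i
    obtain ⟨hle, hn, hsimp⟩ := hstep i
    refine ⟨Subgroup.map_mono hle, key_normal e.toMonoidHom hle hn, ?_⟩
    haveI := hn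
    haveI := key_normal e.toMonoidHom hle hn
    obtain ⟨eq⟩ := key_equiv e.toMonoidHom hle (hker _ _) (hn := hn)
    exact simple_congr eq hsimp
  · exact key_normal e.toMonoidHom (hstep i0).1 hn0
  · haveI := hn0
    haveI := key_normal e.toMonoidHom (hstep i0).1 hn0
    obtain ⟨eq⟩ := key_equiv e.toMonoidHom (hstep i0).1 (hker _ _) (hn := hn0)
    exact ⟨eq.symm.trans e0⟩

end Toolkit

section Toolkit2

variable {X : Type} [Group X]

theorem subtype_ker_le (M : Subgroup X) (A B : Subgroup ↥M) : M.subtype.ker ⊓ B ≤ A := by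
  rw [Subgroup.ker_subtype]; exact le_trans inf_le_left bot_le

theorem noCompFactor_of_subsingleton [Subsingleton X] {S : Type} [Group S] :
    ¬ IsCompFactor S X := by
  rintro ⟨n, c, ⟨h0, hl, hstep⟩, i0, hn0, -⟩
  obtain ⟨-, hn, hsimp⟩ := hstep i0
  haveI := hn
  haveI : Subsingleton ↥(c i0.succ) := inferInstance
  haveI : Subsingleton ((c i0.succ) ⧸ (c i0.castSucc).subgroupOf (c i0.succ)) :=
    ⟨fun a b => by
      obtain ⟨x, rfl⟩ := QuotientGroup.mk'_surjective _ a
      obtain ⟨y, rfl⟩ := QuotientGroup.mk'_surjective _ b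
      rw [Subsingleton.elim x y]⟩
  haveI := hsimp
  exact false_of_nontrivial_of_subsingleton
    ((c i0.succ) ⧸ (c i0.castSucc).subgroupOf (c i0.succ))

theorem subgroup_card_lt [Finite X] {M : Subgroup X} (h : M ≠ ⊤) :
    Nat.card ↥M < Nat.card X := by
  have h1 : Nat.card ↥M = (M : Set X).ncard := Nat.card_coe_set_eq _
  have h2 : (M : Set X) ⊂ Set.univ := by
    rw [Set.ssubset_univ_iff]
    intro hc
    exact h (by rwa [← Subgroup.coe_eq_univ])
  calc Nat.card ↥M = (M : Set X).ncard := h1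
    _ < (Set.univ : Set X).ncard := Set.ncard_lt_ncard h2 Set.finite_univ
    _ = Nat.card X := Set.ncard_univ _

theorem subgroup_card_lt_of_lt [Finite X] {N M : Subgroup X} (h : N < M) :
    Nat.card ↥N < Nat.card ↥M := by
  have h1 : Nat.card ↥N = (N : Set X).ncard := Nat.card_coe_set_eq _
  have h2 : Nat.card ↥M = (M : Set X).ncard := Nat.card_coe_set_eq _
  rw [h1, h2]
  refine Set.ncard_lt_ncard ?_ (Set.toFinite _)
  obtain ⟨hle, x, hxM, hxN⟩ := SetLike.lt_iff_le_and_exists.mp h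
  exact (Set.ssubset_iff_of_subset (fun y hy => hle hy)).mpr ⟨x, hxM, hxN⟩

theorem quotient_card_lt [Finite X] (N : Subgroup X) [N.Normal] (h : N ≠ ⊥) :
    Nat.card (X ⧸ N) < Nat.card X := by
  have hc := Subgroup.card_eq_card_quotient_mul_card_subgroup N
  have h2 : 1 < Nat.card ↥N := (Subgroup.one_lt_card_iff_ne_bot N).mpr h
  have h0 : 0 < Nat.card (X ⧸ N) := Nat.card_pos
  rw [hc]
  exact lt_mul_of_one_lt_right h0 h2

theorem exists_maximal_normal [Finite X] (P : Subgroup X) (hP : P.Normal) (hPne : P ≠ ⊤) :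
    ∃ (M : Subgroup X) (hn : M.Normal), P ≤ M ∧ M ≠ ⊤ ∧
      (haveI := hn; IsSimpleGroup (X ⧸ M)) := by
  classical
  obtain ⟨M, hMmem, hMmax⟩ := Set.Finite.exists_maximalFor id
    {Q : Subgroup X | Q.Normal ∧ P ≤ Q ∧ Q ≠ ⊤} (Set.toFinite _) ⟨P, hP, le_rfl, hPne⟩
  obtain ⟨hMnorm, hPM, hMne⟩ := hMmem
  haveI := hMnorm
  refine ⟨M, hMnorm, hPM, hMne, ?_⟩
  haveI : Nontrivial (X ⧸ M) := by
    obtain ⟨x, hx⟩ : ∃ x, x ∉ M := by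
      by_contra h; push_neg at h; exact hMne ((Subgroup.eq_top_iff' M).mpr h)
    refine ⟨⟨QuotientGroup.mk x, 1, ?_⟩⟩
    rw [Ne, QuotientGroup.eq_one_iff]
    exact hx
  constructor
  intro Q hQ
  set R := Q.comap (QuotientGroup.mk' M) with hR
  have hRn : R.Normal := hQ.comap _
  have hMR : M ≤ R := by
    intro x hx
    show QuotientGroup.mk' M x ∈ Q
    have hx1 : QuotientGroup.mk' M x = 1 := by
      rw [QuotientGroup.mk'_apply, QuotientGroup.eq_one_iff]; exact hx
    rw [hx1]; exact Q.one_mem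
  have hQmap : Q = R.map (QuotientGroup.mk' M) :=
    (Subgroup.map_comap_eq_self_of_surjective (QuotientGroup.mk'_surjective M) Q).symm
  by_cases hRtop : R = ⊤
  · right
    rw [hQmap, hRtop, Subgroup.map_top_of_surjective _ (QuotientGroup.mk'_surjective M)]
  · left
    have hMeq : M = R := le_antisymm hMR (hMmax ⟨hRn, le_trans hPM hMR, hRtop⟩ hMR)
    rw [hQmap, ← hMeq]
    apply le_bot_iff.mp
    rintro y ⟨x, hx, rfl⟩
    rw [Subgroup.mem_bot]
    rw [QuotientGroup.mk'_apply, QuotientGroup.eq_one_iff]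
    exact hx

theorem quot_subgroupOf_top_equiv (M : Subgroup X) [hM : M.Normal] :
    Nonempty ((↥(⊤:Subgroup X) ⧸ M.subgroupOf (⊤:Subgroup X)) ≃* (X ⧸ M)) := by
  let ψ : ↥(⊤:Subgroup X) →* X ⧸ M :=
    (QuotientGroup.mk' M).comp (Subgroup.topEquiv).toMonoidHom
  have hsurj : Function.Surjective ψ :=
    (QuotientGroup.mk'_surjective _).comp (Subgroup.topEquiv).surjective
  have hker : ψ.ker = M.subgroupOf (⊤:Subgroup X) := by
    ext b
    rw [MonoidHom.mem_ker, Subgroup.mem_subgroupOf]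
    show QuotientGroup.mk' M (b : X) = 1 ↔ _
    rw [QuotientGroup.mk'_apply, QuotientGroup.eq_one_iff]
  exact ⟨(QuotientGroup.quotientMulEquivOfEq hker).symm.trans
    (QuotientGroup.quotientKerEquivOfSurjective ψ hsurj)⟩

theorem isCompSeries_snoc {M : Subgroup X} (hM : M.Normal)
    (hsimp : haveI := hM; IsSimpleGroup (X ⧸ M)) {n : ℕ} {c : Fin (n+1) → Subgroup ↥M}
    (h : IsCompSeries n c) :
    IsCompSeries (n+1) (Fin.snoc (fun i => (c i).map M.subtype) (⊤ : Subgroup X)) := by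
  haveI := hM
  obtain ⟨h0, hl, hstep⟩ := h
  refine ⟨?_, ?_, ?_⟩
  · have e0 : (0 : Fin (n+2)) = Fin.castSucc 0 := by simp
    rw [e0, Fin.snoc_castSucc, h0, Subgroup.map_bot]
  · rw [Fin.snoc_last]
  · intro i
    refine Fin.lastCases ?_ ?_ i
    · have e1 : (Fin.last n).castSucc = Fin.castSucc (Fin.last n) := rfl
      have e2 : (Fin.last n).succ = Fin.last (n+1) := Fin.succ_last n
      rw [e1, e2, Fin.snoc_castSucc, Fin.snoc_last, hl]
      have hmap : (⊤ : Subgroup ↥M).map M.subtype = M := by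
        rw [← MonoidHom.range_eq_map, Subgroup.range_subtype]
      rw [hmap]
      refine ⟨le_top, Subgroup.normal_subgroupOf, ?_⟩
      obtain ⟨eq⟩ := quot_subgroupOf_top_equiv M
      exact simple_congr eq.symm hsimp
    · intro j
      have e1 : (j.castSucc).castSucc = Fin.castSucc j.castSucc := rfl
      have e2 : (j.castSucc).succ = Fin.castSucc j.succ := Fin.succ_castSucc j
      rw [e1, e2, Fin.snoc_castSucc, Fin.snoc_castSucc]
      obtain ⟨hle, hn, hsimp'⟩ := hstep j
      refine ⟨Subgroup.map_mono hle, key_normal M.subtype hle hn, ?_⟩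
      haveI := hn
      haveI := key_normal M.subtype hle hn
      obtain ⟨eq⟩ := key_equiv M.subtype hle (subtype_ker_le M _ _) (hn := hn)
      exact simple_congr eq hsimp'

end Toolkit2

section Toolkit3

variable {X : Type} [Group X]

theorem isCompFactor_of_normal {M : Subgroup X} (hM : M.Normal)
    (hsimp : haveI := hM; IsSimpleGroup (X ⧸ M)) {S : Type} [Group S]
    (h : IsCompFactor S ↥M) : IsCompFactor S X := by
  obtain ⟨n, c, hser, i0, hn0, ⟨e0⟩⟩ := h
  refine ⟨n+1, Fin.snoc (fun i => (c i).map M.subtype) (⊤ : Subgroup X),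
    isCompSeries_snoc hM hsimp hser, i0.castSucc, ?_⟩
  have e1 : (Fin.snoc (fun i => (c i).map M.subtype) (⊤ : Subgroup X) : Fin (n+2) → Subgroup X)
      (i0.castSucc).castSucc = (c i0.castSucc).map M.subtype := by
    rw [Fin.snoc_castSucc]
  have e2 : (Fin.snoc (fun i => (c i).map M.subtype) (⊤ : Subgroup X) : Fin (n+2) → Subgroup X)
      (i0.castSucc).succ = (c i0.succ).map M.subtype := by
    rw [Fin.succ_castSucc, Fin.snoc_castSucc]
  rw [e1, e2]
  have hle := (hser.2.2 i0).1
  refine ⟨key_normal M.subtype hle hn0, ?_⟩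
  haveI := hn0
  haveI := key_normal M.subtype hle hn0
  obtain ⟨eq⟩ := key_equiv M.subtype hle (subtype_ker_le M _ _) (hn := hn0)
  exact ⟨eq.symm.trans e0⟩

theorem exists_compSeries_aux : ∀ (N : ℕ) (X : Type) [Group X] [Finite X], Nat.card X ≤ N →
    ∃ (n : ℕ) (c : Fin (n+1) → Subgroup X), IsCompSeries n c := by
  intro N
  induction N with
  | zero =>
    intro X _ _ hcard
    have : 0 < Nat.card X := Nat.card_pos
    omega
  | succ N ih =>
    intro X _ _ hcard
    by_cases htriv : (⊥ : Subgroup X) = ⊤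
    · exact ⟨0, fun _ => ⊥, rfl, htriv, fun i => i.elim0⟩
    · obtain ⟨M, hMn, -, hMne, hsimp⟩ := exists_maximal_normal (⊥ : Subgroup X)
        inferInstance htriv
      have hlt : Nat.card ↥M < Nat.card X := subgroup_card_lt hMne
      obtain ⟨m, σ, hσ⟩ := ih ↥M (by omega)
      exact ⟨m+1, _, isCompSeries_snoc hMn hsimp hσ⟩

theorem exists_compSeries (X : Type) [Group X] [Finite X] :
    ∃ (n : ℕ) (c : Fin (n+1) → Subgroup X), IsCompSeries n c :=
  exists_compSeries_aux (Nat.card X) X le_rfl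

theorem exists_compFactor (X : Type) [Group X] [Finite X] (h : Nontrivial X) :
    ∃ (S : Type) (_ : Group S), IsCompFactor S X := by
  obtain ⟨n, c, hser⟩ := exists_compSeries X
  match n, c, hser with
  | 0, c, hser =>
    exfalso
    have h1 : (⊥ : Subgroup X) = ⊤ := by
      have := hser.1
      have h2 := hser.2.1
      rw [show (Fin.last 0) = 0 from rfl] at h2
      rw [← this, h2]
    obtain ⟨x, y, hxy⟩ := h
    apply hxy
    have hx : x ∈ (⊥ : Subgroup X) := h1.symm ▸ Subgroup.mem_top x
    have hy : y ∈ (⊥ : Subgroup X) := h1.symm ▸ Subgroup.mem_top y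
    rw [Subgroup.mem_bot] at hx hy
    rw [hx, hy]
  | (m+1), c, hser =>
    obtain ⟨hle, hn, hsimp⟩ := hser.2.2 ⟨0, Nat.succ_pos m⟩
    haveI := hn
    exact ⟨_, inferInstance, ⟨m+1, c, hser, ⟨0, Nat.succ_pos m⟩, hn, ⟨MulEquiv.refl _⟩⟩⟩

theorem common_compFactor_aux : ∀ (N : ℕ) (X : Type) [Group X] [Finite X] (P : Subgroup X),
    Nat.card X ≤ N → P.Normal → P ≠ ⊥ →
    ∃ (S : Type) (_ : Group S), IsCompFactor S ↥P ∧ IsCompFactor S X := by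
  intro N
  induction N with
  | zero =>
    intro X _ _ P hcard _ _
    have : 0 < Nat.card X := Nat.card_pos
    omega
  | succ N ih =>
    intro X _ _ P hcard hP hPbot
    haveI := hP
    have hnt : Nontrivial X := by
      rcases subsingleton_or_nontrivial X with hs | hn
      · exfalso
        apply hPbot
        ext x
        simp only [Subgroup.mem_bot]
        constructor
        · intro _; exact Subsingleton.elim x 1
        · rintro rfl; exact P.one_mem
      · exact hn
    by_cases hPtop : P = ⊤
    · obtain ⟨S, hS, hCF⟩ := exists_compFactor X hnt
      refine ⟨S, hS, ?_, hCF⟩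
      have : IsCompFactor S ↥(⊤ : Subgroup X) :=
        isCompFactor_congr Subgroup.topEquiv.symm hCF
      rw [hPtop]
      exact this
    · obtain ⟨M, hMn, hPM, hMne, hsimp⟩ := exists_maximal_normal P hP hPtop
      haveI := hMn
      have hlt : Nat.card ↥M < Nat.card X := subgroup_card_lt hMne
      have hP'n : (P.subgroupOf M).Normal := Subgroup.normal_subgroupOf
      have hP'bot : P.subgroupOf M ≠ ⊥ := by
        intro hc
        apply hPbot
        ext x
        simp only [Subgroup.mem_bot]
        constructor
        · intro hx
          have hmem : (⟨x, hPM hx⟩ : ↥M) ∈ P.subgroupOf M := by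
            rwa [Subgroup.mem_subgroupOf]
          rw [hc, Subgroup.mem_bot] at hmem
          exact Subtype.ext_iff.mp hmem
        · rintro rfl; exact P.one_mem
      obtain ⟨S, hS, hCFP', hCFM⟩ := ih ↥M (P.subgroupOf M) (by omega) hP'n hP'bot
      refine ⟨S, hS, ?_, isCompFactor_of_normal hMn hsimp hCFM⟩
      exact isCompFactor_congr (Subgroup.subgroupOfEquivOfLe hPM) hCFP'

theorem common_compFactor {X : Type} [Group X] [Finite X] {P : Subgroup X}
    (hP : P.Normal) (hPbot : P ≠ ⊥) :
    ∃ (S : Type) (_ : Group S), IsCompFactor S ↥P ∧ IsCompFactor S X :=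
  common_compFactor_aux (Nat.card X) X P le_rfl hP hPbot

theorem compFactor_comm {X : Type} [Group X] (hcomm : ∀ a b : X, a * b = b * a)
    {S : Type} [Group S] (h : IsCompFactor S X) : ∀ a b : S, a * b = b * a := by
  obtain ⟨n, c, hser, i0, hn0, ⟨e0⟩⟩ := h
  haveI := hn0
  have hsub : ∀ a b : ↥(c i0.succ), a * b = b * a := by
    intro a b
    ext
    exact hcomm a b
  have hquot : ∀ a b : ((c i0.succ) ⧸ (c i0.castSucc).subgroupOf (c i0.succ)),
      a * b = b * a := by
    intro a b
    obtain ⟨x, rfl⟩ := QuotientGroup.mk'_surjective _ a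
    obtain ⟨y, rfl⟩ := QuotientGroup.mk'_surjective _ b
    rw [← map_mul, ← map_mul, hsub]
  intro a b
  have := hquot (e0.symm a) (e0.symm b)
  have := congrArg e0 this
  simpa using this

end Toolkit3

section Toolkit4

variable {G : Type} [Group G]

open QuotientGroup

theorem comap_map_mk' (N K : Subgroup G) [N.Normal] (hNK : N ≤ K) :
    (K.map (mk' N)).comap (mk' N) = K := by
  rw [Subgroup.comap_map_eq, QuotientGroup.ker_mk', sup_of_le_left hNK]

theorem chief_map {N H K : Subgroup G} [hN : N.Normal] (hcf : IsChiefFactor G H K)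
    (hNK : N ≤ K) : IsChiefFactor (G ⧸ N) (H.map (mk' N)) (K.map (mk' N)) := by
  have hNH : N ≤ H := le_trans hNK hcf.lt.le
  refine ⟨hcf.normalH.map _ (mk'_surjective N), hcf.normalK.map _ (mk'_surjective N), ?_, ?_⟩
  · refine lt_of_le_of_ne (Subgroup.map_mono hcf.lt.le) ?_
    intro hc
    have := congrArg (Subgroup.comap (mk' N)) hc
    rw [comap_map_mk' N K hNK, comap_map_mk' N H hNH] at this
    exact hcf.lt.ne this
  · intro Q hQ hKQ hQH
    have hQc : (Q.comap (mk' N)).Normal := hQ.comap _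
    have h1 : K ≤ Q.comap (mk' N) := by
      calc K = (K.map (mk' N)).comap (mk' N) := (comap_map_mk' N K hNK).symm
        _ ≤ Q.comap (mk' N) := Subgroup.comap_mono hKQ
    have h2 : Q.comap (mk' N) ≤ H := by
      calc Q.comap (mk' N) ≤ (H.map (mk' N)).comap (mk' N) := Subgroup.comap_mono hQH
        _ = H := comap_map_mk' N H hNH
    have hmapQ : (Q.comap (mk' N)).map (mk' N) = Q :=
      Subgroup.map_comap_eq_self_of_surjective (mk'_surjective N) Q
    rcases hcf.no_middle _ hQc h1 h2 with h | h
    · left; rw [← hmapQ, h]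
    · right; rw [← hmapQ, h]

theorem chief_comap {N : Subgroup G} [hN : N.Normal] {Hb Kb : Subgroup (G ⧸ N)}
    (hcf : IsChiefFactor (G ⧸ N) Hb Kb) :
    IsChiefFactor G (Hb.comap (mk' N)) (Kb.comap (mk' N)) ∧ N ≤ Kb.comap (mk' N) ∧
      (Hb.comap (mk' N)).map (mk' N) = Hb ∧ (Kb.comap (mk' N)).map (mk' N) = Kb := by
  have hmapH : (Hb.comap (mk' N)).map (mk' N) = Hb :=
    Subgroup.map_comap_eq_self_of_surjective (mk'_surjective N) Hb
  have hmapK : (Kb.comap (mk' N)).map (mk' N) = Kb :=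
    Subgroup.map_comap_eq_self_of_surjective (mk'_surjective N) Kb
  have hNK : N ≤ Kb.comap (mk' N) := by
    intro x hx
    show (mk' N) x ∈ Kb
    have : (mk' N) x = 1 := by rw [mk'_apply, QuotientGroup.eq_one_iff]; exact hx
    rw [this]; exact Kb.one_mem
  refine ⟨⟨hcf.normalH.comap _, hcf.normalK.comap _, ?_, ?_⟩, hNK, hmapH, hmapK⟩
  · refine lt_of_le_of_ne (Subgroup.comap_mono hcf.lt.le) ?_
    intro hc
    have := congrArg (Subgroup.map (mk' N)) hc
    rw [hmapH, hmapK] at this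
    exact hcf.lt.ne this
  · intro Q hQ hKQ hQH
    have hQn : (Q.map (mk' N)).Normal := hQ.map _ (mk'_surjective N)
    have h1 : Kb ≤ Q.map (mk' N) := by
      rw [← hmapK]; exact Subgroup.map_mono hKQ
    have h2 : Q.map (mk' N) ≤ Hb := by
      rw [← hmapH]; exact Subgroup.map_mono hQH
    have hNQ : N ≤ Q := le_trans hNK hKQ
    have hQc : (Q.map (mk' N)).comap (mk' N) = Q := comap_map_mk' N Q hNQ
    rcases hcf.no_middle _ hQn h1 h2 with h | h
    · left
      rw [← hQc, h]
    · right
      rw [← hQc, h]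
  
theorem relCentralizer_map {N H K : Subgroup G} [hN : N.Normal]
    (hKn : K.Normal) (hNK : N ≤ K) :
    relCentralizer (H.map (mk' N)) (K.map (mk' N)) (hKn.map _ (mk'_surjective N))
      = (relCentralizer H K hKn).map (mk' N) := by
  ext y
  constructor
  · intro hy
    obtain ⟨x, rfl⟩ := mk'_surjective N y
    refine ⟨x, ?_, rfl⟩
    intro h hh
    have hx := hy ((mk' N) h) ⟨h, hh, rfl⟩
    have hmem : (mk' N) (x * h * x⁻¹ * h⁻¹) ∈ K.map (mk' N) := by
      simpa [map_mul, map_inv] using hx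
    have hm : x * h * x⁻¹ * h⁻¹ ∈ (K.map (mk' N)).comap (mk' N) := hmem
    rwa [comap_map_mk' N K hNK] at hm
  · rintro ⟨x, hx, rfl⟩
    rintro hb ⟨h, hh, rfl⟩
    exact ⟨x * h * x⁻¹ * h⁻¹, hx h hh, by simp [map_mul, map_inv]⟩

theorem K_le_smallCentralizer {H K : Subgroup G} (hK : K.Normal) :
    K ≤ smallCentralizer H K hK := by
  apply le_sSup
  refine ⟨hK, ?_⟩
  intro S _ hCF
  exfalso
  haveI : Subsingleton (↥(K ⊔ K) ⧸ K.subgroupOf (K ⊔ K)) := by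
    constructor
    intro a b
    obtain ⟨z, rfl⟩ := mk'_surjective _ a
    obtain ⟨w, rfl⟩ := mk'_surjective _ b
    have hz : z ∈ K.subgroupOf (K ⊔ K) := by
      rw [Subgroup.mem_subgroupOf]
      exact (sup_le le_rfl le_rfl : K ⊔ K ≤ K) z.2
    have hw : w ∈ K.subgroupOf (K ⊔ K) := by
      rw [Subgroup.mem_subgroupOf]
      exact (sup_le le_rfl le_rfl : K ⊔ K ≤ K) w.2
    exact QuotientGroup.eq.mpr (Subgroup.mul_mem _ (Subgroup.inv_mem _ hz) hw)
  exact noCompFactor_of_subsingleton hCF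

theorem smallCentralizer_map {N H K : Subgroup G} [hN : N.Normal]
    (hKn : K.Normal) (hHn : H.Normal) (hKH : K ≤ H) (hNK : N ≤ K) :
    smallCentralizer (H.map (mk' N)) (K.map (mk' N)) (hKn.map _ (mk'_surjective N))
      = (smallCentralizer H K hKn).map (mk' N) := by
  haveI := hKn
  haveI := hHn
  have hNH : N ≤ H := le_trans hNK hKH
  -- the two defining sets
  have factor_iff : ∀ (A : Subgroup G), N ≤ A → K ≤ A → ∀ (S : Type) (_ : Group S),
      (IsCompFactor S (↥A ⧸ K.subgroupOf A) ↔
       IsCompFactor S (↥(A.map (mk' N)) ⧸ (K.map (mk' N)).subgroupOf (A.map (mk' N)))) := by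
    intro A hNA hKA S _
    haveI h1 : (K.subgroupOf A).Normal := Subgroup.normal_subgroupOf
    haveI h2 : ((K.map (mk' N)).subgroupOf (A.map (mk' N))).Normal :=
      key_normal (mk' N) hKA h1
    obtain ⟨e⟩ := key_equiv (mk' N) hKA
      (by rw [QuotientGroup.ker_mk']; exact le_trans inf_le_left hNK) (hn := h1)
    exact ⟨fun h => isCompFactor_congr e h, fun h => isCompFactor_congr e.symm h⟩
  have avoid_iff : ∀ (M : Subgroup G),
      ((∀ (S : Type) (_ : Group S),
        IsCompFactor S (↥(M ⊔ K) ⧸ K.subgroupOf (M ⊔ K)) →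
          ¬ IsCompFactor S (↥H ⧸ K.subgroupOf H)) ↔
       (∀ (S : Type) (_ : Group S),
        IsCompFactor S (↥(M.map (mk' N) ⊔ K.map (mk' N)) ⧸
          (K.map (mk' N)).subgroupOf (M.map (mk' N) ⊔ K.map (mk' N))) →
          ¬ IsCompFactor S (↥(H.map (mk' N)) ⧸ (K.map (mk' N)).subgroupOf (H.map (mk' N))))) := by
    intro M
    have hsup : M.map (mk' N) ⊔ K.map (mk' N) = (M ⊔ K).map (mk' N) :=
      (Subgroup.map_sup M K (mk' N)).symm
    have hNMK : N ≤ M ⊔ K := le_trans hNK le_sup_right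
    constructor
    · intro ha S iS hCF hCF2
      rw [hsup] at hCF
      exact ha S iS ((factor_iff (M ⊔ K) hNMK le_sup_right S iS).mpr hCF)
        ((factor_iff H hNH hKH S iS).mpr hCF2)
    · intro ha S iS hCF hCF2
      apply ha S iS
      · rw [hsup]
        exact (factor_iff (M ⊔ K) hNMK le_sup_right S iS).mp hCF
      · exact (factor_iff H hNH hKH S iS).mp hCF2
  apply le_antisymm
  · apply sSup_le
    rintro Mb ⟨hMbn, hMba⟩
    set M := Mb.comap (mk' N) with hM
    have hMn : M.Normal := hMbn.comap _
    have hmap : M.map (mk' N) = Mb :=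
      Subgroup.map_comap_eq_self_of_surjective (mk'_surjective N) Mb
    have hMavoid : ∀ (S : Type) (_ : Group S),
        IsCompFactor S (↥(M ⊔ K) ⧸ K.subgroupOf (M ⊔ K)) →
          ¬ IsCompFactor S (↥H ⧸ K.subgroupOf H) := by
      apply (avoid_iff M).mpr
      rw [hmap]
      exact hMba
    have : M ≤ smallCentralizer H K hKn := le_sSup ⟨hMn, hMavoid⟩
    rw [← hmap]
    exact Subgroup.map_mono this
  · rw [smallCentralizer, (Subgroup.gc_map_comap (mk' N)).l_sSup]
    apply iSup_le
    intro M
    apply iSup_le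
    rintro ⟨hMn, hMa⟩
    apply le_sSup
    exact ⟨hMn.map _ (mk'_surjective N), (avoid_iff M).mp hMa⟩

end Toolkit4

section Toolkit5

open QuotientGroup

/-- A class respecting isomorphisms. -/
def RespIso (C : GroupClass) : Prop :=
  ∀ (A : Type) [Group A] [Finite A] (B : Type) [Group B] [Finite B],
    Nonempty (A ≃* B) → C A → C B

theorem respIso_of_emptyOrFormation {C : GroupClass} (h : C = EmptyClass ∨ IsFormation C) :
    RespIso C := by
  rcases h with rfl | hf
  · intro A _ _ B _ _ _ hCA
    exact (hCA : False).elim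
  · exact fun A _ _ B _ _ he hCA => hf.iso_closed A B he hCA

theorem K_le_relCentralizer {G : Type} [Group G] {H K : Subgroup G} (hK : K.Normal) :
    K ≤ relCentralizer H K hK := by
  intro k hk h hh
  have key : k * h * k⁻¹ * h⁻¹ = k * (h * k⁻¹ * h⁻¹) := by group
  rw [key]
  exact K.mul_mem hk (by simpa using hK.conj_mem k⁻¹ (K.inv_mem hk) h)

theorem central_transfer {G : Type} [Group G] [Finite G] (L₂ : GroupClass) (g : CompSatFun)
    (g' : GroupClass)
    (hg : ∀ (S : Type) (iS : Group S) (fS : Finite S), L₂ S → RespIso (g S)) (hg' : RespIso g')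
    {N H K : Subgroup G} [hN : N.Normal] (hcf : IsChiefFactor G H K) (hNK : N ≤ K)
    {Hb Kb : Subgroup (G ⧸ N)} (hHb : H.map (mk' N) = Hb) (hKb : K.map (mk' N) = Kb)
    (hcf' : IsChiefFactor (G ⧸ N) Hb Kb) :
    LCompFCentral L₂ g g' H K hcf ↔ LCompFCentral L₂ g g' Hb Kb hcf' := by
  subst hHb
  subst hKb
  haveI := hcf.normalK
  haveI := hcf.normalH
  have hKH := hcf.lt.le
  have hNH : N ≤ H := le_trans hNK hKH
  have factor_iff : ∀ (S : Type) (_ : Group S),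
      (IsCompFactor S (↥H ⧸ K.subgroupOf H) ↔
       IsCompFactor S (↥(H.map (mk' N)) ⧸ (K.map (mk' N)).subgroupOf (H.map (mk' N)))) := by
    intro S iS
    haveI h1 : (K.subgroupOf H).Normal := Subgroup.normal_subgroupOf
    haveI h2 := key_normal (mk' N) hKH h1
    obtain ⟨e⟩ := key_equiv (mk' N) hKH
      (by rw [QuotientGroup.ker_mk']; exact le_trans inf_le_left hNK) (hn := h1)
    exact ⟨fun h => isCompFactor_congr e h, fun h => isCompFactor_congr e.symm h⟩
  haveI hCn : (relCentralizer H K hcf.normalK).Normal :=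
    relCentralizer_normal hcf.normalH hcf.normalK
  haveI hCn' : (relCentralizer (H.map (mk' N)) (K.map (mk' N)) hcf'.normalK).Normal :=
    relCentralizer_normal hcf'.normalH hcf'.normalK
  haveI hCmn : ((relCentralizer H K hcf.normalK).map (mk' N)).Normal :=
    hCn.map _ (mk'_surjective N)
  have hCeq : relCentralizer (H.map (mk' N)) (K.map (mk' N)) hcf'.normalK
      = (relCentralizer H K hcf.normalK).map (mk' N) := relCentralizer_map hcf.normalK hNK
  have hNC : N ≤ relCentralizer H K hcf.normalK :=
    le_trans hNK (K_le_relCentralizer hcf.normalK)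
  have eC : Nonempty ((G ⧸ relCentralizer H K hcf.normalK) ≃*
      ((G ⧸ N) ⧸ relCentralizer (H.map (mk' N)) (K.map (mk' N)) hcf'.normalK)) :=
    ⟨(QuotientGroup.quotientQuotientEquivQuotient N _ hNC).symm.trans
      (QuotientGroup.quotientMulEquivOfEq hCeq.symm)⟩
  haveI hcn : (smallCentralizer H K hcf.normalK).Normal := smallCentralizer_normal hcf.normalK
  haveI hcn' : (smallCentralizer (H.map (mk' N)) (K.map (mk' N)) hcf'.normalK).Normal :=
    smallCentralizer_normal hcf'.normalK
  haveI hcmn : ((smallCentralizer H K hcf.normalK).map (mk' N)).Normal :=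
    hcn.map _ (mk'_surjective N)
  have hceq : smallCentralizer (H.map (mk' N)) (K.map (mk' N)) hcf'.normalK
      = (smallCentralizer H K hcf.normalK).map (mk' N) :=
    smallCentralizer_map hcf.normalK hcf.normalH hKH hNK
  have hNc : N ≤ smallCentralizer H K hcf.normalK :=
    le_trans hNK (K_le_smallCentralizer hcf.normalK)
  have ec : Nonempty ((G ⧸ smallCentralizer H K hcf.normalK) ≃*
      ((G ⧸ N) ⧸ smallCentralizer (H.map (mk' N)) (K.map (mk' N)) hcf'.normalK)) :=
    ⟨(QuotientGroup.quotientQuotientEquivQuotient N _ hNc).symm.trans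
      (QuotientGroup.quotientMulEquivOfEq hceq.symm)⟩
  constructor
  · rintro (⟨S, iS, fS, hCF, hLS, hgS⟩ | ⟨⟨S, iS, fS, hCF, hsimp, hnLS⟩, hg'c⟩)
    · left
      exact ⟨S, iS, fS, (factor_iff S iS).mp hCF, hLS, hg S iS fS hLS _ _ eC hgS⟩
    · right
      exact ⟨⟨S, iS, fS, (factor_iff S iS).mp hCF, hsimp, hnLS⟩, hg' _ _ ec hg'c⟩
  · rintro (⟨S, iS, fS, hCF, hLS, hgS⟩ | ⟨⟨S, iS, fS, hCF, hsimp, hnLS⟩, hg'c⟩)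
    · left
      exact ⟨S, iS, fS, (factor_iff S iS).mpr hCF, hLS, hg S iS fS hLS _ _ ⟨eC.some.symm⟩ hgS⟩
    · right
      exact ⟨⟨S, iS, fS, (factor_iff S iS).mpr hCF, hsimp, hnLS⟩, hg' _ _ ⟨ec.some.symm⟩ hg'c⟩

theorem CFL_quotient_closed {L₂ : GroupClass} {g : CompSatFun} {g' : GroupClass}
    (hg : ∀ (S : Type) (iS : Group S) (fS : Finite S), L₂ S → RespIso (g S)) (hg' : RespIso g')
    (G : Type) [Group G] [Finite G]
    (hG : CFL L₂ g g' G) (N : Subgroup G) [hN : N.Normal] : CFL L₂ g g' (G ⧸ N) := by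
  intro Hb Kb hcfb
  obtain ⟨hcfc, hNKc, hmapH, hmapK⟩ := chief_comap hcfb
  exact (central_transfer L₂ g g' hg hg' hcfc hNKc hmapH hmapK hcfb).mp (hG _ _ hcfc)

end Toolkit5

section Toolkit6

open QuotientGroup

theorem subsingleton_quot_top (G : Type) [Group G] :
    Subsingleton (G ⧸ (⊤ : Subgroup G)) := by
  constructor
  intro a b
  obtain ⟨x, rfl⟩ := mk'_surjective _ a
  obtain ⟨y, rfl⟩ := mk'_surjective _ b
  exact QuotientGroup.eq.mpr (Subgroup.mem_top _)

theorem formation_trivial_mem {F : GroupClass} (hF : IsFormation F)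
    (hne : ∃ X : FinGrp, F X.carrier) (G : Type) [Group G] [Finite G]
    (hG : Subsingleton G) : F G := by
  obtain ⟨X0, hX0⟩ := hne
  have h1 : F (X0.carrier ⧸ (⊤ : Subgroup X0.carrier)) := hF.quotient_closed _ ⊤ hX0
  refine hF.iso_closed _ _ ?_ h1
  haveI := subsingleton_quot_top X0.carrier
  exact ⟨{ toFun := fun _ => 1, invFun := fun _ => 1,
           left_inv := fun x => Subsingleton.elim _ _,
           right_inv := fun x => Subsingleton.elim _ _,
           map_mul' := fun _ _ => Subsingleton.elim _ _ }⟩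

theorem exists_minimal_normal {G : Type} [Group G] [Finite G]
    {W : Subgroup G} (hW : W.Normal) (hWbot : W ≠ ⊥) :
    ∃ N : Subgroup G, N.Normal ∧ N ≠ ⊥ ∧ N ≤ W ∧
      ∀ M : Subgroup G, M.Normal → M < N → M = ⊥ := by
  classical
  obtain ⟨N, hNmem, hNmin⟩ := Set.Finite.exists_minimalFor id
    {Q : Subgroup G | Q.Normal ∧ Q ≠ ⊥ ∧ Q ≤ W} (Set.toFinite _) ⟨W, hW, hWbot, le_rfl⟩
  obtain ⟨hNn, hNbot, hNW⟩ := hNmem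
  refine ⟨N, hNn, hNbot, hNW, ?_⟩
  intro M hM hMN
  by_contra hMbot
  have heq : N = M := le_antisymm (hNmin ⟨hM, hMbot, le_trans hMN.le hNW⟩ hMN.le) hMN.le
  exact hMN.ne heq.symm

theorem chief_of_minimal {G : Type} [Group G] {N : Subgroup G} (hN : N.Normal)
    (hNbot : N ≠ ⊥) (hmin : ∀ M : Subgroup G, M.Normal → M < N → M = ⊥) :
    IsChiefFactor G N ⊥ :=
  ⟨hN, inferInstance, bot_lt_iff_ne_bot.mpr hNbot, fun M hM _ hMN => by
    rcases lt_or_eq_of_le hMN with hlt | heq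
    · exact Or.inl (hmin M hM hlt)
    · exact Or.inr heq⟩

theorem quot_bot_equiv {G : Type} [Group G] (A : Subgroup G) :
    Nonempty ((↥A ⧸ (⊥ : Subgroup G).subgroupOf A) ≃* ↥A) := by
  have h : (⊥ : Subgroup G).subgroupOf A = ⊥ := Subgroup.bot_subgroupOf A
  exact ⟨(QuotientGroup.quotientMulEquivOfEq h).trans QuotientGroup.quotientBot⟩

theorem smallCentralizer_eq_bot {G : Type} [Group G] [Finite G] {N : Subgroup G}
    (hNn : N.Normal) (hNbot : N ≠ ⊥)
    (huniq : ∀ W : Subgroup G, W.Normal → W ≠ ⊥ → N ≤ W) (hb : (⊥ : Subgroup G).Normal) :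
    smallCentralizer N ⊥ hb = ⊥ := by
  haveI := hNn
  apply le_bot_iff.mp
  apply sSup_le
  rintro M ⟨hMn, hMa⟩
  rcases eq_or_ne M ⊥ with rfl | hMne
  · exact le_rfl
  · exfalso
    have hNM : N ≤ M := huniq M hMn hMne
    have hP'n : (N.subgroupOf M).Normal := Subgroup.normal_subgroupOf
    have hP'bot : N.subgroupOf M ≠ ⊥ := by
      intro hc
      apply hNbot
      ext x
      simp only [Subgroup.mem_bot]
      constructor
      · intro hx
        have hmem : (⟨x, hNM hx⟩ : ↥M) ∈ N.subgroupOf M := by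
          rwa [Subgroup.mem_subgroupOf]
        rw [hc, Subgroup.mem_bot] at hmem
        exact Subtype.ext_iff.mp hmem
      · rintro rfl; exact N.one_mem
    obtain ⟨S, iS, hCFP, hCFM⟩ := common_compFactor hP'n hP'bot
    have hCFN : IsCompFactor S ↥N :=
      isCompFactor_congr (Subgroup.subgroupOfEquivOfLe hNM) hCFP
    have e1 : ((↥(M ⊔ ⊥) ⧸ (⊥ : Subgroup G).subgroupOf (M ⊔ ⊥))) ≃* ↥M :=
      ((quot_bot_equiv (M ⊔ ⊥)).some).trans (MulEquiv.subgroupCongr (sup_bot_eq M))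
    exact hMa S iS (isCompFactor_congr e1.symm hCFM)
      (isCompFactor_congr (quot_bot_equiv N).some.symm hCFN)

theorem relCentralizer_eq_bot {G : Type} [Group G] {N : Subgroup G}
    (hNn : N.Normal) (hb : (⊥ : Subgroup G).Normal)
    (huniq : ∀ W : Subgroup G, W.Normal → W ≠ ⊥ → N ≤ W)
    (hnab : ¬ ∀ a b : ↥N, a * b = b * a) :
    relCentralizer N ⊥ hb = ⊥ := by
  by_contra hne
  have hNC : N ≤ relCentralizer N ⊥ hb :=
    huniq _ (relCentralizer_normal hNn hb) hne
  apply hnab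
  intro a b
  have hcomm := hNC a.2 (b : G) b.2
  rw [Subgroup.mem_bot] at hcomm
  ext
  have : (a : G) * b * (a : G)⁻¹ * (b : G)⁻¹ = 1 := hcomm
  open scoped commutatorElement in have h2 : ⁅(a : G), (b : G)⁆ = 1 := by rw [commutatorElement_def]; exact this
  exact commutatorElement_eq_one_iff_mul_comm.mp h2

theorem hard_induction
    (F : GroupClass) (hF : IsFormation F) (hne : ∃ X : FinGrp, F X.carrier)
    (L₁ : GroupClass) (f : CompSatFun) (f' : GroupClass) (hsat1 : IsLCompSatellite L₁ f f')
    (hFiff : ∀ (G : Type) [Group G] [Finite G], F G ↔ CFL L₁ f f' G)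
    (L₂ : GroupClass) (g : CompSatFun) (g' : GroupClass)
    (hg2 : ∀ (S : Type) (iS : Group S) (fS : Finite S), L₂ S → RespIso (g S))
    (hg2' : RespIso g')
    (HC : ∀ (G : Type) [Group G] [Finite G] (N : Subgroup G) (hNn : N.Normal)
      (hcf : IsChiefFactor G N ⊥)
      (huniq : ∀ W : Subgroup G, W.Normal → W ≠ ⊥ → N ≤ W),
      LCompFCentral L₂ g g' N ⊥ hcf →
      (∀ (H K : Subgroup G) (hcf' : IsChiefFactor G H K), N ≤ K →
        LCompFCentral L₁ f f' H K hcf') →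
      F G) :
    ∀ (G : Type) [Group G] [Finite G], CFL L₂ g g' G → F G := by
  have hg1 : ∀ (S : Type) (iS : Group S) (fS : Finite S), L₁ S → RespIso (f S) :=
    fun S iS fS hLS => respIso_of_emptyOrFormation (hsat1.2.1 S hLS)
  have hg1' : RespIso f' := respIso_of_emptyOrFormation hsat1.2.2
  suffices haux : ∀ (n : ℕ) (G : Type) [Group G] [Finite G], Nat.card G ≤ n →
      CFL L₂ g g' G → F G by
    intro G _ _ hG
    exact haux (Nat.card G) G le_rfl hG
  intro n
  induction n with
  | zero =>
    intro G _ _ hcard _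
    have : 0 < Nat.card G := Nat.card_pos
    omega
  | succ n ih =>
    intro G _ _ hcard hG
    rcases subsingleton_or_nontrivial G with hs | hnt
    · exact formation_trivial_mem hF hne G hs
    · have htop : (⊤ : Subgroup G) ≠ ⊥ := by
        intro hc
        obtain ⟨z, hz⟩ := exists_ne (1 : G)
        apply hz
        have : z ∈ (⊤ : Subgroup G) := Subgroup.mem_top z
        rw [hc, Subgroup.mem_bot] at this
        exact this
      obtain ⟨N, hNn, hNbot, -, hNmin⟩ :=
        exists_minimal_normal (G := G) inferInstance htop
      haveI := hNn
      have hqcard : Nat.card (G ⧸ N) ≤ n := by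
        have := quotient_card_lt N hNbot
        omega
      by_cases huniq : ∀ W : Subgroup G, W.Normal → W ≠ ⊥ → N ≤ W
      · have hcf : IsChiefFactor G N ⊥ := chief_of_minimal hNn hNbot hNmin
        refine HC G N hNn hcf huniq (hG N ⊥ hcf) ?_
        intro H K hcf' hNK
        have hqF : F (G ⧸ N) :=
          ih (G ⧸ N) hqcard (CFL_quotient_closed hg2 hg2' G hG N)
        have hq2 : CFL L₁ f f' (G ⧸ N) := (hFiff _).mp hqF
        have hcfq : IsChiefFactor (G ⧸ N) (H.map (mk' N)) (K.map (mk' N)) :=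
          chief_map hcf' hNK
        exact (central_transfer L₁ f f' hg1 hg1' hcf' hNK rfl rfl hcfq).mpr
          (hq2 _ _ hcfq)
      · push_neg at huniq
        obtain ⟨W, hWn, hWbot, hWN⟩ := huniq
        obtain ⟨N₂, hN₂n, hN₂bot, hN₂W, -⟩ := exists_minimal_normal hWn hWbot
        haveI := hN₂n
        have hN₂N : ¬ N ≤ N₂ := fun hc => hWN (le_trans hc hN₂W)
        have hinter : N ⊓ N₂ = ⊥ := by
          haveI : (N ⊓ N₂).Normal := inf_normal N N₂
          rcases lt_or_eq_of_le (inf_le_left : N ⊓ N₂ ≤ N) with hlt | heq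
          · exact hNmin _ this hlt
          · exfalso
            apply hN₂N
            rw [← heq]
            exact inf_le_right
        have hq2card : Nat.card (G ⧸ N₂) ≤ n := by
          have := quotient_card_lt N₂ hN₂bot
          omega
        have hF1 : F (G ⧸ N) := ih (G ⧸ N) hqcard (CFL_quotient_closed hg2 hg2' G hG N)
        have hF2 : F (G ⧸ N₂) := ih (G ⧸ N₂) hq2card (CFL_quotient_closed hg2 hg2' G hG N₂)
        exact hF.subdirect_closed G N N₂ hinter hF1 hF2

end Toolkit6

/-- a non-empty formation has an `𝔏`-composition satellite iff it has an
`𝔏⁺`-composition satellite. -/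
theorem statement_15 (F : GroupClass) (hF : IsFormation F) (hne : ∃ X : FinGrp, F X.carrier)
    (L : GroupClass) (hL : IsSimpleClass L) :
    (∃ (f : CompSatFun) (f' : GroupClass), IsLCompSatellite L f f' ∧
      ∀ (G : Type) [Group G] [Finite G], (F G ↔ CFL L f f' G)) ↔
    (∃ (h : CompSatFun) (h' : GroupClass), IsLCompSatellite (abelianIn L) h h' ∧
      ∀ (G : Type) [Group G] [Finite G], (F G ↔ CFL (abelianIn L) h h' G)) := by
  classical
  obtain ⟨hLsimple, hLiso⟩ := hL
  constructor
  · -- forward direction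
    rintro ⟨f, f', hsat, hFiff⟩
    have hsat2 : IsLCompSatellite (abelianIn L) f F := by
      refine ⟨?_, ?_, Or.inr hF⟩
      · intro S _ _ T _ _ hS hT he
        exact hsat.1 S T hS.1 hT.1 he
      · intro S _ _ hS
        exact hsat.2.1 S hS.1
    have hvals2 := hsat2.2.1
    have HC1 : ∀ (G' : Type) [Group G'] [Finite G'] (N : Subgroup G') (hNn : N.Normal)
        (hcf : IsChiefFactor G' N ⊥)
        (huniq : ∀ W : Subgroup G', W.Normal → W ≠ ⊥ → N ≤ W),
        LCompFCentral (abelianIn L) f F N ⊥ hcf →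
        (∀ (H K : Subgroup G') (hcf' : IsChiefFactor G' H K), N ≤ K →
          LCompFCentral L f f' H K hcf') → F G' := by
      intro G' iG' fG' N hNn hcf huniq hcent habove
      have hNbot : N ≠ ⊥ := hcf.lt.ne'
      rcases hcent with ⟨S, iS, fS, hCF, hLS, hfS⟩ | ⟨-, hFc⟩
      · apply (hFiff G').mpr
        intro H K hcf'
        by_cases hK : K = ⊥
        · subst hK
          have hHN : H = N := by
            have hHbot : H ≠ ⊥ := hcf'.lt.ne'
            have hNH : N ≤ H := huniq H hcf'.normalH hHbot
            rcases hcf'.no_middle N hNn bot_le hNH with heq | heq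
            · exact absurd heq hNbot
            · exact heq.symm
          subst hHN
          exact Or.inl ⟨S, iS, fS, hCF, hLS.1, hfS⟩
        · exact habove H K hcf' (huniq K hcf'.normalK hK)
      · have hbot : smallCentralizer N ⊥ hcf.normalK = ⊥ :=
          smallCentralizer_eq_bot hNn hNbot huniq hcf.normalK
        haveI := smallCentralizer_normal (H := N) hcf.normalK
        refine hF.iso_closed _ G' ?_ hFc
        exact ⟨(QuotientGroup.quotientMulEquivOfEq hbot).trans QuotientGroup.quotientBot⟩
    refine ⟨f, F, hsat2, ?_⟩
    intro G iG fG
    constructor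
    · intro hG H K hcf
      rcases (hFiff G).mp hG H K hcf with ⟨S, iS, fS, hCF, hLS, hfS⟩ |
        ⟨⟨S, iS, fS, hCF, hsimp, hnLS⟩, hf'⟩
      · by_cases hab : ∀ a b : S, a * b = b * a
        · exact Or.inl ⟨S, iS, fS, hCF, ⟨hLS, hab⟩, hfS⟩
        · refine Or.inr ⟨⟨S, iS, fS, hCF, @hLsimple S iS fS hLS, fun hc => hab hc.2⟩, ?_⟩
          haveI := smallCentralizer_normal (H := H) hcf.normalK
          exact hF.quotient_closed G _ hG
      · refine Or.inr ⟨⟨S, iS, fS, hCF, hsimp, fun hc => hnLS hc.1⟩, ?_⟩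
        haveI := smallCentralizer_normal (H := H) hcf.normalK
        exact hF.quotient_closed G _ hG
    · intro hG
      exact hard_induction F hF hne L f f' hsat hFiff (abelianIn L) f F
        (fun S iS fS hLS => respIso_of_emptyOrFormation (@hvals2 S iS fS hLS))
        (respIso_of_emptyOrFormation (Or.inr hF)) HC1 G hG
  · -- backward direction
    rintro ⟨h, h', hsat, hFiff⟩
    let f₂ : CompSatFun := fun S iS fS =>
      @ite _ (@abelianIn L S iS fS) (Classical.propDecidable _) (@h S iS fS) F
    have hpos : ∀ (S : Type) (iS : Group S) (fS : Finite S), @abelianIn L S iS fS →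
        @f₂ S iS fS = @h S iS fS := fun S iS fS hab => if_pos hab
    have hneg : ∀ (S : Type) (iS : Group S) (fS : Finite S), ¬ @abelianIn L S iS fS →
        @f₂ S iS fS = F := fun S iS fS hab => if_neg hab
    have habiso : ∀ (S : Type) (iS : Group S) (fS : Finite S) (T : Type) (iT : Group T)
        (fT : Finite T), Nonempty (S ≃* T) → @abelianIn L S iS fS → @abelianIn L T iT fT := by
      intro S iS fS T iT fT he hab
      obtain ⟨e⟩ := he
      refine ⟨@hLiso S iS fS T iT fT ⟨e⟩ hab.1, ?_⟩
      intro a b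
      have hcomm := hab.2 (e.symm a) (e.symm b)
      have := congrArg e hcomm
      simpa using this
    have hsat2 : IsLCompSatellite L f₂ F := by
      refine ⟨?_, ?_, Or.inr hF⟩
      · intro S iS fS T iT fT hS hT he
        by_cases hab : @abelianIn L S iS fS
        · have habT : @abelianIn L T iT fT := habiso S iS fS T iT fT he hab
          rw [hpos S iS fS hab, hpos T iT fT habT]
          exact hsat.1 S T hab habT he
        · have habT : ¬ @abelianIn L T iT fT := fun hc =>
            hab (habiso T iT fT S iS fS ⟨he.some.symm⟩ hc)
          rw [hneg S iS fS hab, hneg T iT fT habT]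
      · intro S iS fS hS
        by_cases hab : @abelianIn L S iS fS
        · rw [hpos S iS fS hab]
          exact hsat.2.1 S hab
        · rw [hneg S iS fS hab]
          exact Or.inr hF
    have hvals2 := hsat2.2.1
    have HC2 : ∀ (G' : Type) [Group G'] [Finite G'] (N : Subgroup G') (hNn : N.Normal)
        (hcf : IsChiefFactor G' N ⊥)
        (huniq : ∀ W : Subgroup G', W.Normal → W ≠ ⊥ → N ≤ W),
        LCompFCentral L f₂ F N ⊥ hcf →
        (∀ (H K : Subgroup G') (hcf' : IsChiefFactor G' H K), N ≤ K →
          LCompFCentral (abelianIn L) h h' H K hcf') → F G' := by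
      intro G' iG' fG' N hNn hcf huniq hcent habove
      have hNbot : N ≠ ⊥ := hcf.lt.ne'
      rcases hcent with ⟨S, iS, fS, hCF, hLS, hf2S⟩ | ⟨-, hFc⟩
      · by_cases hab : @abelianIn L S iS fS
        · apply (hFiff G').mpr
          intro H K hcf'
          by_cases hK : K = ⊥
          · subst hK
            have hHN : H = N := by
              have hHbot : H ≠ ⊥ := hcf'.lt.ne'
              have hNH : N ≤ H := huniq H hcf'.normalH hHbot
              rcases hcf'.no_middle N hNn bot_le hNH with heq | heq
              · exact absurd heq hNbot
              · exact heq.symm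
            subst hHN
            refine Or.inl ⟨S, iS, fS, hCF, hab, ?_⟩
            have hval := hf2S
            rw [hpos S iS fS hab] at hval
            exact hval
          · exact habove H K hcf' (huniq K hcf'.normalK hK)
        · haveI := relCentralizer_normal hcf.normalH hcf.normalK
          have hFC : F (G' ⧸ relCentralizer N ⊥ hcf.normalK) := by
            have hval := hf2S
            rw [hneg S iS fS hab] at hval
            exact hval
          have hnab : ¬ ∀ a b : S, a * b = b * a := fun hc => hab ⟨hLS, hc⟩
          have hnabN : ¬ ∀ a b : ↥N, a * b = b * a := by
            intro hc
            apply hnab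
            refine @compFactor_comm _ _ ?_ S iS hCF
            intro a b
            obtain ⟨x, rfl⟩ := QuotientGroup.mk'_surjective _ a
            obtain ⟨y, rfl⟩ := QuotientGroup.mk'_surjective _ b
            rw [← map_mul, ← map_mul, hc x y]
          have hCbot : relCentralizer N ⊥ hcf.normalK = ⊥ :=
            relCentralizer_eq_bot hNn hcf.normalK huniq hnabN
          haveI := relCentralizer_normal hcf.normalH hcf.normalK
          refine hF.iso_closed _ G' ?_ hFC
          exact ⟨(QuotientGroup.quotientMulEquivOfEq hCbot).trans QuotientGroup.quotientBot⟩
      · have hbot : smallCentralizer N ⊥ hcf.normalK = ⊥ :=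
          smallCentralizer_eq_bot hNn hNbot huniq hcf.normalK
        haveI := smallCentralizer_normal (H := N) hcf.normalK
        refine hF.iso_closed _ G' ?_ hFc
        exact ⟨(QuotientGroup.quotientMulEquivOfEq hbot).trans QuotientGroup.quotientBot⟩
    refine ⟨f₂, F, hsat2, ?_⟩
    intro G iG fG
    constructor
    · intro hG H K hcf
      rcases (hFiff G).mp hG H K hcf with ⟨S, iS, fS, hCF, hLS, hhS⟩ |
        ⟨⟨S, iS, fS, hCF, hsimp, hnLS⟩, hh'⟩
      · refine Or.inl ⟨S, iS, fS, hCF, hLS.1, ?_⟩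
        rw [hpos S iS fS hLS]
        exact hhS
      · by_cases hLS : @L S iS fS
        · refine Or.inl ⟨S, iS, fS, hCF, hLS, ?_⟩
          rw [hneg S iS fS hnLS]
          haveI := relCentralizer_normal hcf.normalH hcf.normalK
          exact hF.quotient_closed G _ hG
        · refine Or.inr ⟨⟨S, iS, fS, hCF, hsimp, hLS⟩, ?_⟩
          haveI := smallCentralizer_normal (H := H) hcf.normalK
          exact hF.quotient_closed G _ hG
    · intro hG
      exact hard_induction F hF hne (abelianIn L) h h' hsat hFiff L f₂ F
        (fun S iS fS hLS => respIso_of_emptyOrFormation (@hvals2 S iS fS hLS))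
        (respIso_of_emptyOrFormation (Or.inr hF)) HC2 G hG
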